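/- Let f : ℝ² \ {0} → ℝ² be continuously differentiable such that for every 2×2 real matrix l with trace l = 0 and every X ∈ ℝ² \ {0}, the Fréchet derivative of f at X evaluated at l·X equals l·f(X). Then there exists α ∈ ℝ such that f(X) = α·X for every X ∈ ℝ² \ {0}. -/

import Mathlib

open Real Matrix

private lemma vne (Y : Fin 2 → ℝ) (h0 : Y 0 = 0) (h1 : Y 1 = 0) : Y = 0 := by
  funext i; fin_cases i <;> simpa

private lemma rot_lemma (f : (Fin 2 → ℝ) → (Fin 2 → ℝ))
    (hD : ∀ X : Fin 2 → ℝ, X ≠ 0 → HasFDerivAt f (fderiv ℝ f X) X)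
    (hequiv : ∀ l : Matrix (Fin 2) (Fin 2) ℝ, l.trace = 0 →
      ∀ X : Fin 2 → ℝ, X ≠ 0 →
        fderiv ℝ f X (l.mulVec X) = l.mulVec (f X))
    (Y : Fin 2 → ℝ) (hY : Y ≠ 0) (t : ℝ) :
    f ![Y 0 * Real.cos t - Y 1 * Real.sin t, Y 0 * Real.sin t + Y 1 * Real.cos t]
      = ![f Y 0 * Real.cos t - f Y 1 * Real.sin t,
          f Y 0 * Real.sin t + f Y 1 * Real.cos t] := by
  set L : Matrix (Fin 2) (Fin 2) ℝ := !![0,-1;1,0] with hL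
  have hLtr : L.trace = 0 := by simp [hL, Matrix.trace]
  set c : ℝ → Fin 2 → ℝ := fun s =>
    ![Y 0 * Real.cos s - Y 1 * Real.sin s, Y 0 * Real.sin s + Y 1 * Real.cos s] with hc
  have hc0 : c 0 = Y := by
    funext i; fin_cases i <;> simp [hc]
  have hcne : ∀ s, c s ≠ 0 := by
    intro s h
    have h0 : Y 0 * Real.cos s - Y 1 * Real.sin s = 0 := by
      have := congrFun h 0; simpa [hc] using this
    have h1 : Y 0 * Real.sin s + Y 1 * Real.cos s = 0 := by
      have := congrFun h 1; simpa [hc] using this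
    have hs := Real.sin_sq_add_cos_sq s
    apply hY
    apply vne
    · linear_combination Real.cos s * h0 + Real.sin s * h1 - Y 0 * hs
    · linear_combination (-Real.sin s) * h0 + Real.cos s * h1 - Y 1 * hs
  have hc' : ∀ s, HasDerivAt c (L.mulVec (c s)) s := by
    intro s
    rw [hasDerivAt_pi]
    intro i
    fin_cases i
    · have d0 : HasDerivAt (fun u => Y 0 * Real.cos u - Y 1 * Real.sin u)
        (Y 0 * (-Real.sin s) - Y 1 * Real.cos s) s :=
        ((Real.hasDerivAt_cos s).const_mul _).sub ((Real.hasDerivAt_sin s).const_mul _)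
      refine d0.congr_deriv ?_
      simp [hL, hc, Matrix.mulVec, dotProduct]; ring
    · have d1 : HasDerivAt (fun u => Y 0 * Real.sin u + Y 1 * Real.cos u)
        (Y 0 * Real.cos s + Y 1 * (-Real.sin s)) s :=
        ((Real.hasDerivAt_sin s).const_mul _).add ((Real.hasDerivAt_cos s).const_mul _)
      refine d1.congr_deriv ?_
      simp [hL, hc, Matrix.mulVec, dotProduct]; ring
  have hg : ∀ s, HasDerivAt (fun u => f (c u)) (L.mulVec (f (c s))) s := by
    intro s
    have := (hD (c s) (hcne s)).comp_hasDerivAt s (hc' s)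
    rwa [hequiv L hLtr (c s) (hcne s)] at this
  have hp : ∀ s, HasDerivAt (fun u => f (c u) 0) (-(f (c s) 1)) s := by
    intro s
    have := hasDerivAt_pi.mp (hg s) 0
    refine this.congr_deriv ?_
    simp [hL, Matrix.mulVec, dotProduct]
  have hq : ∀ s, HasDerivAt (fun u => f (c u) 1) (f (c s) 0) s := by
    intro s
    have := hasDerivAt_pi.mp (hg s) 1
    refine this.congr_deriv ?_
    simp [hL, Matrix.mulVec, dotProduct]
  have hA : ∀ s, HasDerivAt (fun u => f (c u) 0 * Real.cos u + f (c u) 1 * Real.sin u) 0 s := by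
    intro s
    have := ((hp s).mul (Real.hasDerivAt_cos s)).add ((hq s).mul (Real.hasDerivAt_sin s))
    refine this.congr_deriv ?_
    ring
  have hB : ∀ s, HasDerivAt (fun u => -(f (c u) 0) * Real.sin u + f (c u) 1 * Real.cos u) 0 s := by
    intro s
    have := (((hp s).neg).mul (Real.hasDerivAt_sin s)).add ((hq s).mul (Real.hasDerivAt_cos s))
    refine this.congr_deriv ?_
    simp only [Pi.neg_apply]; ring
  have hAc : ∀ s : ℝ, f (c s) 0 * Real.cos s + f (c s) 1 * Real.sin s = f Y 0 := by
    intro s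
    have := is_const_of_deriv_eq_zero (f := fun u => f (c u) 0 * Real.cos u + f (c u) 1 * Real.sin u)
      (fun x => (hA x).differentiableAt) (fun x => (hA x).deriv) s 0
    simpa [hc0] using this
  have hBc : ∀ s : ℝ, -(f (c s) 0) * Real.sin s + f (c s) 1 * Real.cos s = f Y 1 := by
    intro s
    have := is_const_of_deriv_eq_zero (f := fun u => -(f (c u) 0) * Real.sin u + f (c u) 1 * Real.cos u)
      (fun x => (hB x).differentiableAt) (fun x => (hB x).deriv) s 0
    simpa [hc0] using this
  have h1 := hAc t
  have h2 := hBc t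
  have hs := Real.sin_sq_add_cos_sq t
  show f (c t) = _
  funext i; fin_cases i
  · show f (c t) 0 = f Y 0 * Real.cos t - f Y 1 * Real.sin t
    linear_combination Real.cos t * h1 - Real.sin t * h2 - f (c t) 0 * hs
  · show f (c t) 1 = f Y 0 * Real.sin t + f Y 1 * Real.cos t
    linear_combination Real.sin t * h1 + Real.cos t * h2 - f (c t) 1 * hs

private lemma scale_lemma (f : (Fin 2 → ℝ) → (Fin 2 → ℝ))
    (hD : ∀ X : Fin 2 → ℝ, X ≠ 0 → HasFDerivAt f (fderiv ℝ f X) X)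
    (hequiv : ∀ l : Matrix (Fin 2) (Fin 2) ℝ, l.trace = 0 →
      ∀ X : Fin 2 → ℝ, X ≠ 0 →
        fderiv ℝ f X (l.mulVec X) = l.mulVec (f X))
    (Y : Fin 2 → ℝ) (hY : Y ≠ 0) (t : ℝ) :
    f ![Y 0 * Real.exp t, Y 1 * Real.exp (-t)]
      = ![f Y 0 * Real.exp t, f Y 1 * Real.exp (-t)] := by
  set L : Matrix (Fin 2) (Fin 2) ℝ := !![1,0;0,-1] with hL
  have hLtr : L.trace = 0 := by simp [hL, Matrix.trace]
  set c : ℝ → Fin 2 → ℝ := fun s => ![Y 0 * Real.exp s, Y 1 * Real.exp (-s)] with hc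
  have hc0 : c 0 = Y := by funext i; fin_cases i <;> simp [hc]
  have hcne : ∀ s, c s ≠ 0 := by
    intro s h
    have h0 : Y 0 * Real.exp s = 0 := by
      have := congrFun h 0; simpa [hc] using this
    have h1 : Y 1 * Real.exp (-s) = 0 := by
      have := congrFun h 1; simpa [hc] using this
    apply hY
    apply vne
    · exact (mul_eq_zero.mp h0).resolve_right (Real.exp_ne_zero _)
    · exact (mul_eq_zero.mp h1).resolve_right (Real.exp_ne_zero _)
  have hc' : ∀ s, HasDerivAt c (L.mulVec (c s)) s := by
    intro s
    rw [hasDerivAt_pi]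
    intro i
    fin_cases i
    · have d0 : HasDerivAt (fun u => Y 0 * Real.exp u) (Y 0 * Real.exp s) s :=
        (Real.hasDerivAt_exp s).const_mul _
      refine d0.congr_deriv ?_
      simp [hL, hc, Matrix.mulVec, dotProduct]
    · have d1 : HasDerivAt (fun u => Y 1 * Real.exp (-u)) (Y 1 * (Real.exp (-s) * (-1))) s := by
        exact ((Real.hasDerivAt_exp (-s)).comp s ((hasDerivAt_id s).neg)).const_mul _
      refine d1.congr_deriv ?_
      simp [hL, hc, Matrix.mulVec, dotProduct]
  have hg : ∀ s, HasDerivAt (fun u => f (c u)) (L.mulVec (f (c s))) s := by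
    intro s
    have := (hD (c s) (hcne s)).comp_hasDerivAt s (hc' s)
    rwa [hequiv L hLtr (c s) (hcne s)] at this
  have hp : ∀ s, HasDerivAt (fun u => f (c u) 0) (f (c s) 0) s := by
    intro s
    have := hasDerivAt_pi.mp (hg s) 0
    refine this.congr_deriv ?_
    simp [hL, Matrix.mulVec, dotProduct]
  have hq : ∀ s, HasDerivAt (fun u => f (c u) 1) (-(f (c s) 1)) s := by
    intro s
    have := hasDerivAt_pi.mp (hg s) 1
    refine this.congr_deriv ?_
    simp [hL, Matrix.mulVec, dotProduct]
  have hA : ∀ s, HasDerivAt (fun u => f (c u) 0 * Real.exp (-u)) 0 s := by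
    intro s
    have e' : HasDerivAt (fun u : ℝ => Real.exp (-u)) (Real.exp (-s) * (-1)) s :=
      (Real.hasDerivAt_exp (-s)).comp s ((hasDerivAt_id s).neg)
    have := (hp s).mul e'
    refine this.congr_deriv ?_
    ring
  have hB : ∀ s, HasDerivAt (fun u => f (c u) 1 * Real.exp u) 0 s := by
    intro s
    have := (hq s).mul (Real.hasDerivAt_exp s)
    refine this.congr_deriv ?_
    ring
  have hAc : f (c t) 0 * Real.exp (-t) = f Y 0 := by
    have := is_const_of_deriv_eq_zero (f := fun u => f (c u) 0 * Real.exp (-u))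
      (fun x => (hA x).differentiableAt) (fun x => (hA x).deriv) t 0
    simpa [hc0] using this
  have hBc : f (c t) 1 * Real.exp t = f Y 1 := by
    have := is_const_of_deriv_eq_zero (f := fun u => f (c u) 1 * Real.exp u)
      (fun x => (hB x).differentiableAt) (fun x => (hB x).deriv) t 0
    simpa [hc0] using this
  have hexp : Real.exp t * Real.exp (-t) = 1 := by
    rw [← Real.exp_add]; simp
  show f (c t) = _
  funext i; fin_cases i
  · show f (c t) 0 = f Y 0 * Real.exp t
    linear_combination Real.exp t * hAc - f (c t) 0 * hexp
  · show f (c t) 1 = f Y 1 * Real.exp (-t)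
    linear_combination Real.exp (-t) * hBc - f (c t) 1 * hexp

/-- If `f : ℝ² \ {0} → ℝ²` is continuously differentiable and
equivariant with respect to every trace-zero matrix `l` (the Lie algebra
`sl(2,ℝ)`): `Df(X)(l·X) = l·f(X)` for all `X ≠ 0`, then `f(X) = α • X` for some
constant `α ∈ ℝ`. -/
theorem stmt_16 (f : (Fin 2 → ℝ) → (Fin 2 → ℝ))
    (hf : ContDiffOn ℝ 1 f {X : Fin 2 → ℝ | X ≠ 0})
    (hequiv : ∀ l : Matrix (Fin 2) (Fin 2) ℝ, l.trace = 0 →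
      ∀ X : Fin 2 → ℝ, X ≠ 0 →
        fderiv ℝ f X (l.mulVec X) = l.mulVec (f X)) :
    ∃ α : ℝ, ∀ X : Fin 2 → ℝ, X ≠ 0 → f X = α • X := by
  have hopen : IsOpen {X : Fin 2 → ℝ | X ≠ 0} := isOpen_ne
  have hD : ∀ X : Fin 2 → ℝ, X ≠ 0 → HasFDerivAt f (fderiv ℝ f X) X := by
    intro X hX
    have : DifferentiableAt ℝ f X :=
      ((hf.contDiffAt (hopen.mem_nhds hX)).differentiableAt one_ne_zero)
    exact this.hasFDerivAt
  -- the value at e₁ is a multiple of e₁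
  have he1 : (![1, 0] : Fin 2 → ℝ) ≠ 0 := by
    intro h
    have := congrFun h 0
    simp at this
  have hα : f ![1, 0] 1 = 0 := by
    set N : Matrix (Fin 2) (Fin 2) ℝ := !![0,1;0,0] with hN
    have hNtr : N.trace = 0 := by simp [hN, Matrix.trace]
    have hNe1 : N.mulVec ![1, 0] = 0 := by
      funext i; fin_cases i <;> simp [hN, Matrix.mulVec, dotProduct]
    have := hequiv N hNtr ![1, 0] he1
    rw [hNe1] at this
    simp only [map_zero] at this
    have := congrFun this 0
    simpa [hN, Matrix.mulVec, dotProduct] using this.symm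
  refine ⟨f ![1, 0] 0, ?_⟩
  intro X hX
  set r : ℝ := Real.sqrt (X 0 ^ 2 + X 1 ^ 2) with hr
  have hrpos : 0 < r := by
    rw [hr]
    apply Real.sqrt_pos.mpr
    rcases eq_or_ne (X 0) 0 with h0 | h0
    · have h1 : X 1 ≠ 0 := fun h1 => hX (vne X h0 h1)
      positivity
    · positivity
  set z : ℂ := ⟨X 0, X 1⟩ with hz
  have hzne : z ≠ 0 := by
    intro h
    apply hX
    apply vne
    · have := congrArg Complex.re h; simpa [hz] using this
    · have := congrArg Complex.im h; simpa [hz] using this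
  have habs : ‖z‖ = r := by
    rw [Complex.norm_def, Complex.normSq_apply, hr]
    simp [hz]
    ring_nf
  have hcos : Real.cos z.arg = X 0 / r := by
    rw [Complex.cos_arg hzne, habs]
  have hsin : Real.sin z.arg = X 1 / r := by
    rw [Complex.sin_arg, habs]
  -- step 1: scaling from e₁ to (r, 0)
  have h1 := scale_lemma f hD hequiv ![1, 0] he1 (Real.log r)
  simp only [Matrix.cons_val_zero, Matrix.cons_val_one, Matrix.head_cons, one_mul,
    zero_mul] at h1
  rw [Real.exp_log hrpos] at h1
  -- step 2: rotation from (r, 0) to X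
  have hrne : (![r, 0] : Fin 2 → ℝ) ≠ 0 := by
    intro h
    have := congrFun h 0
    simp at this
    exact hrpos.ne' this
  have h2 := rot_lemma f hD hequiv ![r, 0] hrne z.arg
  simp only [Matrix.cons_val_zero, Matrix.cons_val_one, Matrix.head_cons, zero_mul,
    sub_zero, add_zero, zero_add] at h2
  rw [h1] at h2
  simp only [Matrix.cons_val_zero, Matrix.cons_val_one, Matrix.head_cons, zero_mul,
    sub_zero, add_zero, zero_add] at h2
  have hX0 : r * Real.cos z.arg = X 0 := by
    rw [hcos]
    field_simp
  have hX1 : r * Real.sin z.arg = X 1 := by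
    rw [hsin]
    field_simp
  rw [hX0, hX1] at h2
  have hXeta : (![X 0, X 1] : Fin 2 → ℝ) = X := by
    funext i; fin_cases i <;> simp
  rw [hXeta] at h2
  simp only [hα, zero_mul, sub_zero, add_zero] at h2
  rw [mul_assoc, mul_assoc, hX0, hX1] at h2
  rw [h2]
  funext i; fin_cases i <;> simp
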